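/- Let σ be a finite Borel measure on ℝ, γ ∈ ℝ, and H(z) = z + γ + ∫ (1+tz)/(z−t) dσ(t) on the upper half-plane. Suppose x ∈ ℝ satisfies ∫ (1+t²)/(t−x)² dσ(t) ≤ 1 (extended-real integral). Then Im H(x + iy) ≥ 0 for all y > 0, and Im H(x + iy)/y → 1 − ∫ (1+t²)/(t−x)² dσ(t) as y → 0⁺. -/

import Mathlib

open MeasureTheory Filter Complex Topology

lemma st18_im_eq (x y t : ℝ) (hy : 0 < y) :
    ((1 + (t:ℂ) * ((x:ℂ) + (y:ℂ)*Complex.I)) / (((x:ℂ) + (y:ℂ)*Complex.I) - (t:ℂ))).im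
      = -(y * ((1 + t^2) / ((t-x)^2 + y^2))) := by
  have hden : (0:ℝ) < ((t-x)^2 + y^2) := by positivity
  have h1 : Complex.normSq (((x:ℂ) + (y:ℂ)*Complex.I) - (t:ℂ)) = (t-x)^2+y^2 := by
    simp [Complex.normSq_apply]; ring
  rw [Complex.div_im, h1,
    show -(y*((1+t^2)/((t-x)^2+y^2))) = (-(y*(1+t^2)))/((t-x)^2+y^2) by field_simp]
  simp
  ring

lemma st18_int (σ : Measure ℝ) [IsFiniteMeasure σ] (x y : ℝ) (hy : 0 < y) :
    Integrable (fun t : ℝ => (1 + t^2) / ((t-x)^2 + y^2)) σ := by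
  have hc : Continuous fun t : ℝ => (1 + t^2) / ((t-x)^2 + y^2) := by
    apply Continuous.div (by continuity) (by continuity)
    intro t; positivity
  refine (integrable_const ((2*y^2+1+2*x^2)/y^2)).mono' hc.aestronglyMeasurable
    (ae_of_all _ fun t => ?_)
  have hden : (0:ℝ) < (t-x)^2 + y^2 := by positivity
  have h0 : (0:ℝ) ≤ (1 + t^2) / ((t-x)^2 + y^2) := by positivity
  rw [Real.norm_eq_abs, _root_.abs_of_nonneg h0, div_le_div_iff₀ hden (by positivity)]
  nlinarith [sq_nonneg (y*(t-2*x)), sq_nonneg (t-x), sq_nonneg y, sq_nonneg (y*y)]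

lemma st18_decomp (w : ℂ) (t : ℝ) (h : w - (t:ℂ) ≠ 0) :
    (1 + (t:ℂ) * w) / (w - (t:ℂ)) = -w + (1 + w^2) * (w - (t:ℂ))⁻¹ := by
  field_simp
  ring

lemma st18_cint (σ : Measure ℝ) [IsFiniteMeasure σ] (x y : ℝ) (hy : 0 < y) :
    Integrable (fun t : ℝ =>
      (1 + (t:ℂ) * ((x:ℂ) + (y:ℂ)*Complex.I)) / (((x:ℂ) + (y:ℂ)*Complex.I) - (t:ℂ))) σ := by
  have hzim : ((x:ℂ) + (y:ℂ)*Complex.I).im = y := by simp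
  have hne : ∀ t : ℝ, ((x:ℂ) + (y:ℂ)*Complex.I) - (t:ℂ) ≠ 0 := by
    intro t h
    have h2 : (((x:ℂ) + (y:ℂ)*Complex.I) - (t:ℂ)).im = y := by simp
    rw [h] at h2; simp at h2; exact hy.ne' h2.symm
  have heq := fun t : ℝ => st18_decomp ((x:ℂ) + (y:ℂ)*Complex.I) t (hne t)
  simp_rw [heq]
  apply Integrable.add (integrable_const _)
  apply Integrable.const_mul
  have hc : Continuous fun t : ℝ => (((x:ℂ) + (y:ℂ)*Complex.I) - (t:ℂ))⁻¹ :=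
    (continuous_const.sub Complex.continuous_ofReal).inv₀ hne
  refine (integrable_const (y⁻¹)).mono' hc.aestronglyMeasurable (ae_of_all _ fun t => ?_)
  have hley : y ≤ ‖((x:ℂ) + (y:ℂ)*Complex.I) - (t:ℂ)‖ := by
    have h1 : |(((x:ℂ) + (y:ℂ)*Complex.I) - (t:ℂ)).im| ≤
        ‖((x:ℂ) + (y:ℂ)*Complex.I) - (t:ℂ)‖ := Complex.abs_im_le_norm _
    calc y = |(((x:ℂ) + (y:ℂ)*Complex.I) - (t:ℂ)).im| := by simp [abs_of_pos hy]
    _ ≤ _ := h1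
  rw [norm_inv]
  exact inv_anti₀ hy hley

theorem stmt18 (σ : Measure ℝ) [IsFiniteMeasure σ] (γ : ℝ) (x : ℝ)
    (H : ℂ → ℂ)
    (hH : ∀ z : ℂ, 0 < z.im →
      H z = z + (γ : ℂ) + ∫ t : ℝ, (1 + (t : ℂ) * z) / (z - (t : ℂ)) ∂σ)
    (hint : (∫⁻ t : ℝ, ENNReal.ofReal (1 + t ^ 2) / ENNReal.ofReal ((t - x) ^ 2) ∂σ) ≤ 1) :
    (∀ y : ℝ, 0 < y → 0 ≤ (H ((x : ℂ) + (y : ℂ) * Complex.I)).im) ∧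
    Tendsto (fun y : ℝ => (H ((x : ℂ) + (y : ℂ) * Complex.I)).im / y)
      (nhdsWithin 0 (Set.Ioi 0))
      (nhds (1 -
        (∫⁻ t : ℝ, ENNReal.ofReal (1 + t ^ 2) / ENNReal.ofReal ((t - x) ^ 2) ∂σ).toReal)) := by
  set L : ENNReal := ∫⁻ t : ℝ, ENNReal.ofReal (1 + t ^ 2) / ENNReal.ofReal ((t - x) ^ 2) ∂σ
    with hLdef
  set F : ℝ → ENNReal := fun y => ∫⁻ t : ℝ, ENNReal.ofReal ((1 + t^2) / ((t-x)^2 + y^2)) ∂σ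
    with hFdef
  have hsq : ∀ t : ℝ, t ≠ x → (0:ℝ) < (t-x)^2 := by
    intro t ht
    have h3 : t - x ≠ 0 := sub_ne_zero.mpr ht
    exact lt_of_le_of_ne (sq_nonneg _) (Ne.symm (pow_ne_zero 2 h3))
  have hpt : ∀ y : ℝ, 0 < y → ∀ t : ℝ,
      ENNReal.ofReal ((1 + t^2) / ((t-x)^2 + y^2))
        ≤ ENNReal.ofReal (1 + t ^ 2) / ENNReal.ofReal ((t - x) ^ 2) := by
    intro y hy t
    by_cases ht : t = x
    · have h0 : ENNReal.ofReal ((t-x)^2) = 0 := by simp [ht]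
      rw [h0, ENNReal.div_zero]
      · exact le_top
      · simp only [ne_eq, ENNReal.ofReal_eq_zero, not_le]
        positivity
    · rw [← ENNReal.ofReal_div_of_pos (hsq t ht)]
      apply ENNReal.ofReal_le_ofReal
      gcongr
      · nlinarith [sq_nonneg y]
  have hFleL : ∀ y : ℝ, 0 < y → F y ≤ L := fun y hy => lintegral_mono (hpt y hy)
  have hLne : L ≠ ⊤ := ne_top_of_le_ne_top ENNReal.one_ne_top hint
  have hF1 : ∀ y : ℝ, 0 < y → (F y).toReal ≤ 1 := by
    intro y hy
    have := ENNReal.toReal_mono ENNReal.one_ne_top ((hFleL y hy).trans hint)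
    simpa using this
  have hFtoReal : ∀ y : ℝ, 0 < y →
      (F y).toReal = ∫ t : ℝ, (1 + t^2) / ((t-x)^2 + y^2) ∂σ := by
    intro y hy
    have h1 : ENNReal.ofReal (∫ t : ℝ, (1 + t^2) / ((t-x)^2 + y^2) ∂σ) = F y :=
      ofReal_integral_eq_lintegral_ofReal (st18_int σ x y hy)
        (ae_of_all _ fun t => by positivity)
    rw [← h1, ENNReal.toReal_ofReal (integral_nonneg fun t => by positivity)]
  have him : ∀ y : ℝ, 0 < y →
      (H ((x : ℂ) + (y : ℂ) * Complex.I)).im = y * (1 - (F y).toReal) := by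
    intro y hy
    rw [hH _ (by simp [hy])]
    have h2 : (∫ t : ℝ, (1 + (t:ℂ) * ((x:ℂ) + (y:ℂ)*Complex.I))
        / (((x:ℂ) + (y:ℂ)*Complex.I) - (t:ℂ)) ∂σ).im
        = ∫ t : ℝ, ((1 + (t:ℂ) * ((x:ℂ) + (y:ℂ)*Complex.I))
        / (((x:ℂ) + (y:ℂ)*Complex.I) - (t:ℂ))).im ∂σ :=
      (integral_im (st18_cint σ x y hy)).symm
    rw [Complex.add_im, Complex.add_im, h2]
    simp_rw [st18_im_eq x y _ hy]
    rw [integral_neg, integral_const_mul, ← hFtoReal y hy]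
    simp
    ring
  have hc : ∀ y : ℝ, 0 < y → Continuous fun t : ℝ => (1 + t^2) / ((t-x)^2 + y^2) := by
    intro y hy
    apply Continuous.div (by continuity) (by continuity)
    intro t; positivity
  have hanti : ∀ y₁ y₂ : ℝ, 0 < y₁ → y₁ ≤ y₂ → F y₂ ≤ F y₁ := by
    intro y₁ y₂ h1 h12
    apply lintegral_mono
    intro t
    apply ENNReal.ofReal_le_ofReal
    gcongr
  have hseq : Tendsto (fun n : ℕ => F (1/(n+1))) atTop (𝓝 L) := by
    apply lintegral_tendsto_of_tendsto_of_monotone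
    · intro n
      exact (ENNReal.continuous_ofReal.comp (hc _ (by positivity))).aemeasurable
    · refine ae_of_all _ fun t => ?_
      intro n m hnm
      apply ENNReal.ofReal_le_ofReal
      have hmn : (1:ℝ)/(m+1) ≤ 1/(n+1) := by
        apply one_div_le_one_div_of_le (by positivity)
        have : (n:ℝ) ≤ m := by exact_mod_cast hnm
        linarith
      gcongr
    · refine ae_of_all _ fun t => ?_
      by_cases ht : t = x
      · subst ht
        have h0 : ENNReal.ofReal ((t-t)^2) = 0 := by simp
        rw [h0, ENNReal.div_zero (by simp only [ne_eq, ENNReal.ofReal_eq_zero, not_le]; positivity)]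
        apply ENNReal.tendsto_ofReal_atTop.comp
        have hd : Tendsto (fun n : ℕ => (t-t)^2 + (1/(n+1:ℝ))^2) atTop (𝓝[>] 0) := by
          apply tendsto_nhdsWithin_of_tendsto_nhds_of_eventually_within
          · have h6 : Tendsto (fun n : ℕ => (1/(n+1:ℝ))^2) atTop (𝓝 (0:ℝ)) := by
              have h7 : Tendsto (fun n : ℕ => (1/(n+1:ℝ))) atTop (𝓝 0) :=
                tendsto_one_div_add_atTop_nhds_zero_nat
              simpa using h7.pow 2
            simpa using h6
          · exact Eventually.of_forall fun n => Set.mem_Ioi.2 (by positivity)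
        have h5 := hd.inv_tendsto_nhdsGT_zero.const_mul_atTop
          (show (0:ℝ) < 1 + t^2 by positivity)
        simpa [div_eq_mul_inv] using h5
      · have h2 := hsq t ht
        rw [← ENNReal.ofReal_div_of_pos h2]
        apply (ENNReal.continuous_ofReal.tendsto _).comp
        have h3 : Tendsto (fun n : ℕ => (1/(n+1:ℝ))) atTop (𝓝 0) :=
          tendsto_one_div_add_atTop_nhds_zero_nat
        have h4 : Tendsto (fun n : ℕ => (t-x)^2 + (1/(n+1:ℝ))^2) atTop (𝓝 ((t-x)^2)) := by
          simpa using tendsto_const_nhds.add (h3.pow 2)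
        exact tendsto_const_nhds.div h4 h2.ne'
  have hT : Tendsto F (𝓝[>] (0:ℝ)) (𝓝 L) := by
    rw [tendsto_order]
    constructor
    · intro a ha
      obtain ⟨n, hn⟩ := (hseq.eventually_mem (Ioi_mem_nhds ha)).exists
      have hpos : (0:ℝ) < 1/(n+1) := by positivity
      filter_upwards [Ioc_mem_nhdsGT_of_mem ⟨le_refl (0:ℝ), hpos⟩] with y hy
      exact lt_of_lt_of_le hn (hanti y (1/(n+1)) hy.1 hy.2)
    · intro a ha
      filter_upwards [self_mem_nhdsWithin] with y hy
      exact lt_of_le_of_lt (hFleL y hy) ha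
  have htoReal : Tendsto (fun y : ℝ => (F y).toReal) (𝓝[>] (0:ℝ)) (𝓝 L.toReal) :=
    (ENNReal.tendsto_toReal hLne).comp hT
  constructor
  · intro y hy
    rw [him y hy]
    exact mul_nonneg hy.le (by linarith [hF1 y hy])
  · apply Tendsto.congr' _ (tendsto_const_nhds.sub htoReal)
    filter_upwards [self_mem_nhdsWithin] with y hy
    rw [him y hy, mul_comm, mul_div_assoc, div_self (ne_of_gt hy), mul_one]
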